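/- Every strictly convex body inscribed in the rhombic dodecahedron D₃ (touching all twelve faces) has positive volume; more generally, any convex body inscribed in D₃ that is not contained in a plane has positive volume, and among all closed convex sets inscribed in D₃ the minimum volume 0 is attained only by squares (up to the symmetries of D₃). -/

import Mathlib

open RealInnerProductSpace MeasureTheory

set_option maxHeartbeats 1000000

/-- The A₃ root system: the 12 unit vectors that are permutations of `(±1/√2, ±1/√2, 0)`. -/
def A3roots : Set (EuclideanSpace ℝ (Fin 3)) :=
  {v | ∃ (i j : Fin 3) (s t : ℝ), i ≠ j ∧ (s = 1 ∨ s = -1) ∧ (t = 1 ∨ t = -1) ∧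
    v = fun k => if k = i then s / Real.sqrt 2 else if k = j then t / Real.sqrt 2 else 0}

/-- The rhombic dodecahedron circumscribing the unit sphere. -/
def D3 : Set (EuclideanSpace ℝ (Fin 3)) := {x | ∀ v ∈ A3roots, ⟪x, v⟫ ≤ 1}

/-- `K` is inscribed in `D3`: contained in it and touching all twelve faces. -/
def InscribedInD3 (K : Set (EuclideanSpace ℝ (Fin 3))) : Prop :=
  K ⊆ D3 ∧ ∀ v ∈ A3roots, ∃ x ∈ K, ⟪x, v⟫ = 1

/-- `K` is a (possibly degenerate planar) square in ℝ³. -/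
def IsSquareIn3 (K : Set (EuclideanSpace ℝ (Fin 3))) : Prop :=
  ∃ p a b : EuclideanSpace ℝ (Fin 3), ⟪a, b⟫ = 0 ∧ ‖a‖ = ‖b‖ ∧ a ≠ 0 ∧
    K = convexHull ℝ {p + a + b, p + a - b, p - a + b, p - a - b}

lemma fin3_cases (i j k m : Fin 3) (hij : i ≠ j) (hik : i ≠ k) (hjk : j ≠ k) :
    m = i ∨ m = j ∨ m = k := by revert hij hik hjk; revert i j k m; decide

lemma inner_root (x : EuclideanSpace ℝ (Fin 3)) (i j : Fin 3) (hij : i ≠ j) (s t : ℝ) :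
    ⟪x, (WithLp.toLp 2 (fun k => if k = i then s / Real.sqrt 2 else if k = j then t / Real.sqrt 2 else 0) :
      EuclideanSpace ℝ (Fin 3))⟫ = (s * x i + t * x j) / Real.sqrt 2 := by
  simp only [PiLp.inner_apply, RCLike.inner_apply, starRingEnd_apply, star_trivial]
  rw [Fin.sum_univ_three]
  fin_cases i <;> fin_cases j <;> simp_all <;> ring

lemma root_mem (i j : Fin 3) (hij : i ≠ j) (s t : ℝ) (hs : s = 1 ∨ s = -1)
    (ht : t = 1 ∨ t = -1) :
    (WithLp.toLp 2 (fun k => if k = i then s / Real.sqrt 2 else if k = j then t / Real.sqrt 2 else 0) :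
      EuclideanSpace ℝ (Fin 3)) ∈ A3roots := ⟨i, j, s, t, hij, hs, ht, rfl⟩

lemma mem_D3_coord {x : EuclideanSpace ℝ (Fin 3)} (hx : x ∈ D3) (i j : Fin 3) (hij : i ≠ j)
    (s t : ℝ) (hs : s = 1 ∨ s = -1) (ht : t = 1 ∨ t = -1) :
    s * x i + t * x j ≤ Real.sqrt 2 := by
  have h := hx _ (root_mem i j hij s t hs ht)
  rw [inner_root x i j hij s t] at h
  have h2 : (0:ℝ) < Real.sqrt 2 := by positivity
  calc s * x i + t * x j = ((s * x i + t * x j)/Real.sqrt 2) * Real.sqrt 2 := by field_simp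
  _ ≤ 1 * Real.sqrt 2 := by nlinarith
  _ = Real.sqrt 2 := one_mul _

lemma abs_coord {x : EuclideanSpace ℝ (Fin 3)} (hx : x ∈ D3) (i j : Fin 3) (hij : i ≠ j) :
    |x i| + |x j| ≤ Real.sqrt 2 := by
  have h1 := mem_D3_coord hx i j hij 1 1 (Or.inl rfl) (Or.inl rfl)
  have h2 := mem_D3_coord hx i j hij 1 (-1) (Or.inl rfl) (Or.inr rfl)
  have h3 := mem_D3_coord hx i j hij (-1) 1 (Or.inr rfl) (Or.inl rfl)
  have h4 := mem_D3_coord hx i j hij (-1) (-1) (Or.inr rfl) (Or.inr rfl)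
  rcases abs_cases (x i) with ⟨e1, _⟩ | ⟨e1, _⟩ <;> rcases abs_cases (x j) with ⟨e2, _⟩ | ⟨e2, _⟩ <;>
    rw [e1, e2] <;> linarith

lemma coord_max {x : EuclideanSpace ℝ (Fin 3)} (hx : x ∈ D3) (i j : Fin 3) (hij : i ≠ j)
    (s : ℝ) (hs : s = 1 ∨ s = -1) (h : s * x i = Real.sqrt 2) : x j = 0 := by
  have h1 := mem_D3_coord hx i j hij s 1 hs (Or.inl rfl)
  have h2 := mem_D3_coord hx i j hij s (-1) hs (Or.inr rfl)
  linarith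

lemma normsq_le {x : EuclideanSpace ℝ (Fin 3)} (hx : x ∈ D3) :
    (x 0)^2 + (x 1)^2 + (x 2)^2 ≤ 2 := by
  have h01 := abs_coord hx 0 1 (by decide)
  have h02 := abs_coord hx 0 2 (by decide)
  have h12 := abs_coord hx 1 2 (by decide)
  set a := |x 0|; set b := |x 1|; set c := |x 2|
  have ha : 0 ≤ a := abs_nonneg _
  have hb : 0 ≤ b := abs_nonneg _
  have hc : 0 ≤ c := abs_nonneg _
  have hs2 : Real.sqrt 2 ^ 2 = 2 := Real.sq_sqrt (by norm_num)
  have g1 : 0 ≤ (Real.sqrt 2 - a - b) * (a + b) := mul_nonneg (by linarith) (by linarith)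
  have g2 : 0 ≤ (Real.sqrt 2 - b - c) * (b + c) := mul_nonneg (by linarith) (by linarith)
  have g3 : 0 ≤ (Real.sqrt 2 - a - c) * (a + c) := mul_nonneg (by linarith) (by linarith)
  have g4 : 0 ≤ (Real.sqrt 2 - a - b) * (Real.sqrt 2 - c) := mul_nonneg (by linarith) (by linarith)
  have e1 : (x 0)^2 = a^2 := (sq_abs _).symm
  have e2 : (x 1)^2 = b^2 := (sq_abs _).symm
  have e3 : (x 2)^2 = c^2 := (sq_abs _).symm
  rw [e1, e2, e3]
  nlinarith [mul_nonneg ha hb]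

lemma cs3 (d0 d1 d2 w0 w1 w2 : ℝ) :
    (d0*w0 + d1*w1 + d2*w2)^2 ≤ (d0^2+d1^2+d2^2) * (w0^2+w1^2+w2^2) := by
  nlinarith [sq_nonneg (d0*w1 - d1*w0), sq_nonneg (d0*w2 - d2*w0), sq_nonneg (d1*w2 - d2*w1)]

lemma stepA (ni nj nk s t di dj dk : ℝ) (hs2 : s^2 = 1) (ht2 : t^2 = 1)
    (hd : di^2 + dj^2 + dk^2 ≤ 8)
    (hplane : ni*di + nj*dj + nk*dk = 0) (hv : s*di + t*dj = 2*Real.sqrt 2) :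
    (s*ni + t*nj)^2 ≤ ni^2 + nj^2 + nk^2 := by
  obtain ⟨N, hNdef⟩ : ∃ N, N = ni^2 + nj^2 + nk^2 := ⟨_, rfl⟩
  obtain ⟨q, hqdef⟩ : ∃ q, q = s*ni + t*nj := ⟨_, rfl⟩
  rw [← hNdef, ← hqdef]
  have hNnn : 0 ≤ N := by rw [hNdef]; positivity
  rcases eq_or_lt_of_le hNnn with hN0 | hNpos
  · have hni : ni = 0 := by nlinarith [sq_nonneg ni, sq_nonneg nj, sq_nonneg nk]
    have hnj : nj = 0 := by nlinarith [sq_nonneg ni, sq_nonneg nj, sq_nonneg nk]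
    rw [hqdef, hni, hnj]; simp [← hN0]
  · have hcs := cs3 di dj dk (N*s - q*ni) (N*t - q*nj) (-(q*nk))
    have hdot : di*(N*s - q*ni) + dj*(N*t - q*nj) + dk*(-(q*nk)) = 2*Real.sqrt 2*N := by
      linear_combination N * hv - q * hplane
    have hww : (N*s - q*ni)^2 + (N*t - q*nj)^2 + (-(q*nk))^2 = N*(2*N - q^2) := by
      linear_combination N^2*hs2 + N^2*ht2 + 2*N*q*hqdef - q^2*hNdef
    rw [hdot, hww] at hcs
    have hs2' : Real.sqrt 2 ^ 2 = 2 := Real.sq_sqrt (by norm_num)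
    have h8 : (2*Real.sqrt 2*N)^2 = 8*N^2 := by nlinarith
    rw [h8] at hcs
    have hd0 : 0 ≤ di^2 + dj^2 + dk^2 := by positivity
    nlinarith [mul_pos hNpos hNpos, sq_nonneg q, mul_nonneg hd0 (sq_nonneg q),
      mul_nonneg (mul_nonneg hd0 (sq_nonneg q)) hNnn]

lemma prod_zero_of_sq (a b c : ℝ) (h : 2*|a*b| ≤ c^2) (hc : c = 0) : a*b = 0 := by
  rw [hc] at h; simp at h
  have h2 := abs_nonneg (a*b)
  have : |a*b| = 0 := le_antisymm (by rw [abs_mul]; linarith) h2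
  exact abs_eq_zero.1 this

lemma two_zero (n0 n1 n2 : ℝ) (h01 : 2*|n0*n1| ≤ n2^2) (h02 : 2*|n0*n2| ≤ n1^2)
    (h12 : 2*|n1*n2| ≤ n0^2) (hne : ¬(n0 = 0 ∧ n1 = 0 ∧ n2 = 0)) :
    (n0 ≠ 0 ∧ n1 = 0 ∧ n2 = 0) ∨ (n1 ≠ 0 ∧ n0 = 0 ∧ n2 = 0) ∨
    (n2 ≠ 0 ∧ n0 = 0 ∧ n1 = 0) := by
  have ha : 0 ≤ |n0*n1| := abs_nonneg _
  have hb : 0 ≤ |n1*n2| := abs_nonneg _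
  have hc : 0 ≤ |n0*n2| := abs_nonneg _
  have h1 : |n0*n1| * (|n1*n2| * |n0*n2|) = (n0*n1*n2)^2 := by
    rw [← abs_mul, ← abs_mul, show (n0*n1)*((n1*n2)*(n0*n2)) = (n0*n1*n2)^2 by ring,
      abs_of_nonneg (sq_nonneg _)]
  have p1 : (2*|n0*n1|)*(2*|n1*n2|) ≤ n2^2 * n0^2 :=
    mul_le_mul h01 h12 (by linarith) (sq_nonneg _)
  have p2 : ((2*|n0*n1|)*(2*|n1*n2|))*(2*|n0*n2|) ≤ (n2^2 * n0^2) * n1^2 :=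
    mul_le_mul p1 h02 (by linarith) (by positivity)
  have h2 : 8 * (n0*n1*n2)^2 ≤ (n0*n1*n2)^2 := by
    calc 8 * (n0*n1*n2)^2 = ((2*|n0*n1|)*(2*|n1*n2|))*(2*|n0*n2|) := by
          rw [show ((2*|n0*n1|)*(2*|n1*n2|))*(2*|n0*n2|)
            = 8*(|n0*n1| * (|n1*n2| * |n0*n2|)) by ring, h1]
    _ ≤ (n2^2 * n0^2) * n1^2 := p2
    _ = (n0*n1*n2)^2 := by ring
  have h3 : (n0*n1*n2)^2 = 0 := le_antisymm (by linarith) (sq_nonneg _)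
  have h4 : n0*n1*n2 = 0 := sq_eq_zero_iff.mp h3
  by_cases e0 : n0 = 0
  · have h5 : n1*n2 = 0 := prod_zero_of_sq n1 n2 n0 h12 e0
    rcases mul_eq_zero.1 h5 with e1 | e2
    · right; right; exact ⟨fun e2 => hne ⟨e0, e1, e2⟩, e0, e1⟩
    · right; left; exact ⟨fun e1 => hne ⟨e0, e1, e2⟩, e0, e2⟩
  · by_cases e1 : n1 = 0
    · have h5 : n0*n2 = 0 := prod_zero_of_sq n0 n2 n1 h02 e1
      rcases mul_eq_zero.1 h5 with e0' | e2
      · exact absurd e0' e0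
      · left; exact ⟨e0, e1, e2⟩
    · exfalso
      rcases mul_eq_zero.1 h4 with h5 | e2
      · rcases mul_eq_zero.1 h5 with e0' | e1'
        exacts [e0 e0', e1 e1']
      · have h5 : n0*n1 = 0 := prod_zero_of_sq n0 n1 n2 h01 e2
        rcases mul_eq_zero.1 h5 with e0' | e1'
        exacts [e0 e0', e1 e1']

lemma exists_plane {K : Set (EuclideanSpace ℝ (Fin 3))} (hconv : Convex ℝ K)
    (hne : K.Nonempty) (hvol : volume K = 0) :
    ∃ (v : EuclideanSpace ℝ (Fin 3)) (c : ℝ), v ≠ 0 ∧ K ⊆ {x | ⟪x, v⟫ = c} := by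
  obtain ⟨x₀, hx₀⟩ := hne
  set W : Submodule ℝ (EuclideanSpace ℝ (Fin 3)) := Submodule.span ℝ ((· - x₀) '' K) with hW
  by_cases hWtop : W = ⊤
  · exfalso
    have hvs : vectorSpan ℝ K = ⊤ := by
      rw [eq_top_iff, ← hWtop]
      apply Submodule.span_le.2
      rintro _ ⟨y, hy, rfl⟩
      exact vsub_mem_vectorSpan ℝ hy hx₀
    have haff : affineSpan ℝ K = ⊤ :=
      (AffineSubspace.affineSpan_eq_top_iff_vectorSpan_eq_top_of_nonempty ℝ _ _ ⟨x₀, hx₀⟩).2 hvs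
    have hint : (interior K).Nonempty := by
      rw [hconv.interior_nonempty_iff_affineSpan_eq_top]; exact haff
    have := MeasureTheory.Measure.measure_pos_of_nonempty_interior volume hint
    rw [hvol] at this; exact lt_irrefl _ this
  · have hne' : Wᗮ ≠ ⊥ := fun h => hWtop (Submodule.orthogonal_eq_bot_iff.1 h)
    obtain ⟨v, hvW, hv0⟩ := Submodule.exists_mem_ne_zero_of_ne_bot hne'
    refine ⟨v, ⟪x₀, v⟫, hv0, fun y hy => ?_⟩
    have hmem : y - x₀ ∈ W := Submodule.subset_span ⟨y, hy, rfl⟩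
    have h0 := Submodule.inner_right_of_mem_orthogonal hmem hvW
    have h2 : ⟪y - x₀, v⟫ = ⟪y, v⟫ - ⟪x₀, v⟫ := inner_sub_left _ _ _
    simp only [Set.mem_setOf_eq]
    rw [h2] at h0; linarith

noncomputable def avec (i j : Fin 3) : EuclideanSpace ℝ (Fin 3) :=
  WithLp.toLp 2 (fun m => if m = i then Real.sqrt 2 / 2 else if m = j then Real.sqrt 2 / 2 else 0)

noncomputable def bvec (i j : Fin 3) : EuclideanSpace ℝ (Fin 3) :=
  WithLp.toLp 2 (fun m => if m = i then Real.sqrt 2 / 2 else if m = j then -(Real.sqrt 2 / 2) else 0)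

lemma inner_ab (i j : Fin 3) (hij : i ≠ j) : ⟪avec i j, bvec i j⟫ = 0 := by
  unfold avec bvec
  simp only [PiLp.inner_apply, RCLike.inner_apply, starRingEnd_apply, star_trivial]
  rw [Fin.sum_univ_three]
  fin_cases i <;> fin_cases j <;> simp_all <;> ring

lemma norm_ab (i j : Fin 3) (hij : i ≠ j) : ‖avec i j‖ = ‖bvec i j‖ := by
  unfold avec bvec
  rw [EuclideanSpace.norm_eq, EuclideanSpace.norm_eq]
  congr 1
  rw [Fin.sum_univ_three, Fin.sum_univ_three]
  fin_cases i <;> fin_cases j <;> simp_all <;> ring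

lemma square_case {K : Set (EuclideanSpace ℝ (Fin 3))} (hKD3 : K ⊆ D3) (hconv : Convex ℝ K)
    (htouch : ∀ (i j : Fin 3), i ≠ j → ∀ s t : ℝ, (s = 1 ∨ s = -1) → (t = 1 ∨ t = -1) →
      ∃ x ∈ K, s * x i + t * x j = Real.sqrt 2)
    (i j k : Fin 3) (hij : i ≠ j) (hik : i ≠ k) (hjk : j ≠ k)
    (nk c : ℝ) (hnk : nk ≠ 0) (hpl : ∀ x ∈ K, nk * x k = c) : IsSquareIn3 K := by
  have hji : j ≠ i := fun h => hij h.symm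
  have hki : k ≠ i := fun h => hik h.symm
  have hkj : k ≠ j := fun h => hjk h.symm
  have hs2pos : (0:ℝ) < Real.sqrt 2 := by positivity
  have hs2sq : Real.sqrt 2 ^ 2 = 2 := Real.sq_sqrt (by norm_num)
  -- Step C : all points of K have k-th coordinate 0
  have hk0 : ∀ x ∈ K, x k = 0 := by
    have hc' : ∀ x ∈ K, x k = c / nk := fun x hx => by
      field_simp; rw [mul_comm]; exact hpl x hx
    obtain ⟨x, hx, hx1⟩ := htouch i k hik 1 1 (Or.inl rfl) (Or.inl rfl)
    obtain ⟨y, hy, hy1⟩ := htouch i k hik 1 (-1) (Or.inl rfl) (Or.inr rfl)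
    have d1 := mem_D3_coord (hKD3 hx) i k hik 1 (-1) (Or.inl rfl) (Or.inr rfl)
    have d2 := mem_D3_coord (hKD3 hy) i k hik 1 1 (Or.inl rfl) (Or.inl rfl)
    have e1 := hc' x hx
    have e2 := hc' y hy
    have : c / nk = 0 := by linarith
    intro z hz; rw [hc' z hz, this]
  -- the four vertices
  obtain ⟨V1, hV1def⟩ : ∃ V : EuclideanSpace ℝ (Fin 3),
      V = WithLp.toLp 2 (fun m => if m = i then Real.sqrt 2 else 0) := ⟨_, rfl⟩
  obtain ⟨V2, hV2def⟩ : ∃ V : EuclideanSpace ℝ (Fin 3),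
      V = WithLp.toLp 2 (fun m => if m = j then Real.sqrt 2 else 0) := ⟨_, rfl⟩
  obtain ⟨V3, hV3def⟩ : ∃ V : EuclideanSpace ℝ (Fin 3),
      V = WithLp.toLp 2 (fun m => if m = j then -Real.sqrt 2 else 0) := ⟨_, rfl⟩
  obtain ⟨V4, hV4def⟩ : ∃ V : EuclideanSpace ℝ (Fin 3),
      V = WithLp.toLp 2 (fun m => if m = i then -Real.sqrt 2 else 0) := ⟨_, rfl⟩
  -- coordinates of the vertices
  have hV1i : V1 i = Real.sqrt 2 := by rw [hV1def]; simp
  have hV1j : V1 j = 0 := by rw [hV1def]; simp [hji]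
  have hV1k : V1 k = 0 := by rw [hV1def]; simp [hki]
  have hV2i : V2 i = 0 := by rw [hV2def]; simp [hij]
  have hV2j : V2 j = Real.sqrt 2 := by rw [hV2def]; simp
  have hV2k : V2 k = 0 := by rw [hV2def]; simp [hkj]
  have hV3i : V3 i = 0 := by rw [hV3def]; simp [hij]
  have hV3j : V3 j = -Real.sqrt 2 := by rw [hV3def]; simp
  have hV3k : V3 k = 0 := by rw [hV3def]; simp [hkj]
  have hV4i : V4 i = -Real.sqrt 2 := by rw [hV4def]; simp
  have hV4j : V4 j = 0 := by rw [hV4def]; simp [hji]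
  have hV4k : V4 k = 0 := by rw [hV4def]; simp [hki]
  -- vertex memberships
  have vert : ∀ s : ℝ, (s = 1 ∨ s = -1) → ∀ i' j' : Fin 3, i' ≠ j' → i' ≠ k → j' ≠ k →
      (WithLp.toLp 2 (fun m => if m = i' then s * Real.sqrt 2 else 0) : EuclideanSpace ℝ (Fin 3)) ∈ K := by
    intro s hs i' j' hij' hik' hjk'
    obtain ⟨x, hx, hx1⟩ := htouch i' k hik' s 1 hs (Or.inl rfl)
    have hxk := hk0 x hx
    have hxi : s * x i' = Real.sqrt 2 := by rw [hxk] at hx1; linarith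
    have hxj : x j' = 0 := coord_max (hKD3 hx) i' j' hij' s hs hxi
    have hxi' : x i' = s * Real.sqrt 2 := by
      rcases hs with h | h <;> rw [h] at hxi ⊢ <;> linarith
    have hxeq : x = (WithLp.toLp 2 (fun m => if m = i' then s * Real.sqrt 2 else 0) :
        EuclideanSpace ℝ (Fin 3)) := by
      ext m; simp only [PiLp.toLp_apply]
      rcases fin3_cases i' j' k m hij' hik' hjk' with rfl | rfl | rfl
      · rw [if_pos rfl]; exact hxi'
      · rw [if_neg (fun h => hij' h.symm)]; exact hxj
      · rw [if_neg (fun h => hik' h.symm)]; exact hxk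
    rwa [hxeq] at hx
  have hV1K : V1 ∈ K := by
    have h := vert 1 (Or.inl rfl) i j hij hik hjk
    have e : (WithLp.toLp 2 (fun m => if m = i then (1:ℝ) * Real.sqrt 2 else 0) :
        EuclideanSpace ℝ (Fin 3)) = V1 := by
      rw [hV1def]; ext m; by_cases hm : m = i <;> simp [hm]
    rwa [e] at h
  have hV2K : V2 ∈ K := by
    have h := vert 1 (Or.inl rfl) j i hji hjk hik
    have e : (WithLp.toLp 2 (fun m => if m = j then (1:ℝ) * Real.sqrt 2 else 0) :
        EuclideanSpace ℝ (Fin 3)) = V2 := by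
      rw [hV2def]; ext m; by_cases hm : m = j <;> simp [hm]
    rwa [e] at h
  have hV3K : V3 ∈ K := by
    have h := vert (-1) (Or.inr rfl) j i hji hjk hik
    have e : (WithLp.toLp 2 (fun m => if m = j then (-1:ℝ) * Real.sqrt 2 else 0) :
        EuclideanSpace ℝ (Fin 3)) = V3 := by
      rw [hV3def]; ext m; by_cases hm : m = j <;> simp [hm]
    rwa [e] at h
  have hV4K : V4 ∈ K := by
    have h := vert (-1) (Or.inr rfl) i j hij hik hjk
    have e : (WithLp.toLp 2 (fun m => if m = i then (-1:ℝ) * Real.sqrt 2 else 0) :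
        EuclideanSpace ℝ (Fin 3)) = V4 := by
      rw [hV4def]; ext m; by_cases hm : m = i <;> simp [hm]
    rwa [e] at h
  -- the square data
  obtain ⟨a, hadef⟩ : ∃ a : EuclideanSpace ℝ (Fin 3), a = avec i j := ⟨_, rfl⟩
  obtain ⟨b, hbdef⟩ : ∃ b : EuclideanSpace ℝ (Fin 3), b = bvec i j := ⟨_, rfl⟩
  have hai : a i = Real.sqrt 2 / 2 := by rw [hadef]; simp [avec]
  have haj : a j = Real.sqrt 2 / 2 := by rw [hadef]; simp [avec, hji]
  have hak : a k = 0 := by rw [hadef]; simp [avec, hki, hkj]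
  have hbi : b i = Real.sqrt 2 / 2 := by rw [hbdef]; simp [bvec]
  have hbj : b j = -(Real.sqrt 2 / 2) := by rw [hbdef]; simp [bvec, hji]
  have hbk : b k = 0 := by rw [hbdef]; simp [bvec, hki, hkj]
  have coordeq : ∀ u w : EuclideanSpace ℝ (Fin 3),
      u i = w i → u j = w j → u k = w k → u = w := by
    intro u w h1 h2 h3; ext m
    rcases fin3_cases i j k m hij hik hjk with rfl | rfl | rfl
    exacts [h1, h2, h3]
  refine ⟨0, a, b, ?_, ?_, ?_, ?_⟩
  · -- inner product zero
    rw [hadef, hbdef]; exact inner_ab i j hij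
  · -- equal norms
    rw [hadef, hbdef]; exact norm_ab i j hij
  · -- a ≠ 0
    intro h
    have h2 : a i = 0 := by rw [h]; rfl
    rw [hai] at h2; nlinarith
  · -- K equals the convex hull
    have hab1 : (0 : EuclideanSpace ℝ (Fin 3)) + a + b = V1 :=
      coordeq _ _ (by simp [hai, hbi, hV1i] <;> ring) (by simp [haj, hbj, hV1j])
        (by simp [hak, hbk, hV1k])
    have hab2 : (0 : EuclideanSpace ℝ (Fin 3)) + a - b = V2 :=
      coordeq _ _ (by simp [hai, hbi, hV2i]) (by simp [haj, hbj, hV2j] <;> ring)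
        (by simp [hak, hbk, hV2k])
    have hab3 : (0 : EuclideanSpace ℝ (Fin 3)) - a + b = V3 :=
      coordeq _ _ (by simp [hai, hbi, hV3i]) (by simp [haj, hbj, hV3j] <;> ring)
        (by simp [hak, hbk, hV3k])
    have hab4 : (0 : EuclideanSpace ℝ (Fin 3)) - a - b = V4 :=
      coordeq _ _ (by simp [hai, hbi, hV4i] <;> ring) (by simp [haj, hbj, hV4j])
        (by simp [hak, hbk, hV4k])
    rw [hab1, hab2, hab3, hab4]
    apply Set.Subset.antisymm
    · -- K ⊆ hull
      intro x hx
      have hxk := hk0 x hx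
      have habs := abs_coord (hKD3 hx) i j hij
      have hxi1 := le_abs_self (x i)
      have hxi2 := neg_abs_le (x i)
      have hxj1 := le_abs_self (x j)
      have hxj2 := neg_abs_le (x j)
      have hB0 : (0:ℝ) ≤ |x j| := abs_nonneg _
      obtain ⟨w, hwdef⟩ : ∃ w : Fin 4 → ℝ, w = ![(Real.sqrt 2 - |x j| + x i)/(2*Real.sqrt 2),
          (|x j| + x j)/(2*Real.sqrt 2), (|x j| - x j)/(2*Real.sqrt 2),
          (Real.sqrt 2 - |x j| - x i)/(2*Real.sqrt 2)] := ⟨_, rfl⟩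
      obtain ⟨z, hzdef⟩ : ∃ z : Fin 4 → EuclideanSpace ℝ (Fin 3), z = ![V1, V2, V3, V4] :=
        ⟨_, rfl⟩
      have hsum : ∑ m : Fin 4, w m • z m ∈ convexHull ℝ {V1, V2, V3, V4} := by
        apply (convex_convexHull ℝ _).sum_mem
        · intro m _
          fin_cases m <;>
            simp only [hwdef, Matrix.cons_val_zero, Matrix.cons_val_one, Matrix.head_cons,
              Matrix.cons_val_two, Matrix.tail_cons, Matrix.cons_val_three, Fin.isValue] <;>
            exact div_nonneg (by linarith) (by positivity)
        · rw [hwdef, Fin.sum_univ_four]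
          simp only [Matrix.cons_val_zero, Matrix.cons_val_one, Matrix.head_cons,
            Matrix.cons_val_two, Matrix.tail_cons, Matrix.cons_val_three]
          field_simp
          ring
        · intro m _
          apply subset_convexHull
          fin_cases m <;> rw [hzdef] <;> simp
      have hxeq : x = ∑ m : Fin 4, w m • z m := by
        have hw0 : w 0 = (Real.sqrt 2 - |x j| + x i)/(2*Real.sqrt 2) := by rw [hwdef]; rfl
        have hw1 : w 1 = (|x j| + x j)/(2*Real.sqrt 2) := by rw [hwdef]; rfl
        have hw2 : w 2 = (|x j| - x j)/(2*Real.sqrt 2) := by rw [hwdef]; rfl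
        have hw3 : w 3 = (Real.sqrt 2 - |x j| - x i)/(2*Real.sqrt 2) := by rw [hwdef]; rfl
        rw [Fin.sum_univ_four, hzdef]
        simp only [Matrix.cons_val_zero, Matrix.cons_val_one, Matrix.head_cons,
          Matrix.cons_val_two, Matrix.tail_cons, Matrix.cons_val_three]
        apply coordeq
        · simp only [PiLp.add_apply, PiLp.smul_apply, smul_eq_mul,
            hV1i, hV2i, hV3i, hV4i, hw0, hw1, hw2, hw3]
          field_simp
          ring
        · simp only [PiLp.add_apply, PiLp.smul_apply, smul_eq_mul,
            hV1j, hV2j, hV3j, hV4j, hw0, hw1, hw2, hw3]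
          field_simp
          ring
        · simp only [PiLp.add_apply, PiLp.smul_apply, smul_eq_mul,
            hV1k, hV2k, hV3k, hV4k, hw0, hw1, hw2, hw3, hxk]
          ring
      rw [hxeq]; exact hsum
    · -- hull ⊆ K
      apply convexHull_min _ hconv
      intro z hz
      rcases hz with rfl | rfl | rfl | rfl
      exacts [hV1K, hV2K, hV3K, hV4K]

lemma touch_coord {K : Set (EuclideanSpace ℝ (Fin 3))} (hins : InscribedInD3 K) :
    ∀ (i j : Fin 3), i ≠ j → ∀ s t : ℝ, (s = 1 ∨ s = -1) → (t = 1 ∨ t = -1) →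
      ∃ x ∈ K, s * x i + t * x j = Real.sqrt 2 := by
  intro i j hij s t hs ht
  obtain ⟨x, hx, h1⟩ := hins.2 _ (root_mem i j hij s t hs ht)
  rw [inner_root x i j hij s t] at h1
  have h2 : Real.sqrt 2 ≠ 0 := by positivity
  rw [div_eq_one_iff_eq h2] at h1
  exact ⟨x, hx, h1⟩

lemma normsq_le' {x : EuclideanSpace ℝ (Fin 3)} (hx : x ∈ D3) (α β γ : Fin 3)
    (h1 : α ≠ β) (h2 : α ≠ γ) (h3 : β ≠ γ) : (x α)^2 + (x β)^2 + (x γ)^2 ≤ 2 := by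
  have h := normsq_le hx
  fin_cases α <;> fin_cases β <;> fin_cases γ <;> simp_all <;> linarith

lemma planar_square {K : Set (EuclideanSpace ℝ (Fin 3))} (hconv : Convex ℝ K)
    (hins : InscribedInD3 K) (v : EuclideanSpace ℝ (Fin 3)) (c : ℝ) (hv0 : v ≠ 0)
    (hsub : K ⊆ {x | ⟪x, v⟫ = c}) : IsSquareIn3 K := by
  have htouch := touch_coord hins
  have hKD3 := hins.1
  have hpl : ∀ x ∈ K, v 0 * x 0 + v 1 * x 1 + v 2 * x 2 = c := by
    intro x hx
    have h := hsub hx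
    simp only [Set.mem_setOf_eq, PiLp.inner_apply, RCLike.inner_apply, starRingEnd_apply,
      star_trivial, Fin.sum_univ_three] at h
    linarith
  have key : ∀ (α β γ : Fin 3), α ≠ β → α ≠ γ → β ≠ γ →
      (∀ x ∈ K, v α * x α + v β * x β + v γ * x γ = c) →
      ∀ s t : ℝ, (s = 1 ∨ s = -1) → (t = 1 ∨ t = -1) →
      (s * v α + t * v β)^2 ≤ (v α)^2 + (v β)^2 + (v γ)^2 := by
    intro α β γ hαβ hαγ hβγ hplA s t hs ht
    obtain ⟨x, hx, hx1⟩ := htouch α β hαβ s t hs ht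
    have hs' : -s = 1 ∨ -s = -1 := by rcases hs with h | h <;> rw [h] <;> simp
    have ht' : -t = 1 ∨ -t = -1 := by rcases ht with h | h <;> rw [h] <;> simp
    obtain ⟨y, hy, hy1⟩ := htouch α β hαβ (-s) (-t) hs' ht'
    have hs2 : s^2 = 1 := by rcases hs with h | h <;> rw [h] <;> norm_num
    have ht2 : t^2 = 1 := by rcases ht with h | h <;> rw [h] <;> norm_num
    have n1 := normsq_le' (hKD3 hx) α β γ hαβ hαγ hβγ
    have n2 := normsq_le' (hKD3 hy) α β γ hαβ hαγ hβγ
    have hd : (x α - y α)^2 + (x β - y β)^2 + (x γ - y γ)^2 ≤ 8 := by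
      nlinarith [sq_nonneg (x α + y α), sq_nonneg (x β + y β), sq_nonneg (x γ + y γ)]
    have hplane0 : v α * (x α - y α) + v β * (x β - y β) + v γ * (x γ - y γ) = 0 := by
      linear_combination hplA x hx - hplA y hy
    have hv2 : s * (x α - y α) + t * (x β - y β) = 2 * Real.sqrt 2 := by
      linear_combination hx1 + hy1
    exact stepA (v α) (v β) (v γ) s t _ _ _ hs2 ht2 hd hplane0 hv2
  have key01 := key 0 1 2 (by decide) (by decide) (by decide) hpl
  have key02 := key 0 2 1 (by decide) (by decide) (by decide)
    (fun x hx => by linear_combination hpl x hx)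
  have key12 := key 1 2 0 (by decide) (by decide) (by decide)
    (fun x hx => by linear_combination hpl x hx)
  have h01 : 2*|v 0 * v 1| ≤ (v 2)^2 := by
    have k1 := key01 1 1 (Or.inl rfl) (Or.inl rfl)
    have k2 := key01 1 (-1) (Or.inl rfl) (Or.inr rfl)
    rcases abs_cases (v 0 * v 1) with ⟨e, _⟩ | ⟨e, _⟩ <;> rw [e] <;> nlinarith
  have h02 : 2*|v 0 * v 2| ≤ (v 1)^2 := by
    have k1 := key02 1 1 (Or.inl rfl) (Or.inl rfl)
    have k2 := key02 1 (-1) (Or.inl rfl) (Or.inr rfl)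
    rcases abs_cases (v 0 * v 2) with ⟨e, _⟩ | ⟨e, _⟩ <;> rw [e] <;> nlinarith
  have h12 : 2*|v 1 * v 2| ≤ (v 0)^2 := by
    have k1 := key12 1 1 (Or.inl rfl) (Or.inl rfl)
    have k2 := key12 1 (-1) (Or.inl rfl) (Or.inr rfl)
    rcases abs_cases (v 1 * v 2) with ⟨e, _⟩ | ⟨e, _⟩ <;> rw [e] <;> nlinarith
  have hne : ¬(v 0 = 0 ∧ v 1 = 0 ∧ v 2 = 0) := by
    rintro ⟨e0, e1, e2⟩
    exact hv0 (by ext m; fin_cases m <;> simp [e0, e1, e2])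
  rcases two_zero (v 0) (v 1) (v 2) h01 h02 h12 hne with ⟨h, e1, e2⟩ | ⟨h, e0, e2⟩ | ⟨h, e0, e1⟩
  · exact square_case hKD3 hconv htouch 1 2 0 (by decide) (by decide) (by decide) (v 0) c h
      (fun x hx => by have := hpl x hx; rw [e1, e2] at this; linarith)
  · exact square_case hKD3 hconv htouch 0 2 1 (by decide) (by decide) (by decide) (v 1) c h
      (fun x hx => by have := hpl x hx; rw [e0, e2] at this; linarith)
  · exact square_case hKD3 hconv htouch 0 1 2 (by decide) (by decide) (by decide) (v 2) c h
      (fun x hx => by have := hpl x hx; rw [e0, e1] at this; linarith)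

/-- Every strictly convex body inscribed in the rhombic dodecahedron has positive
volume; more generally any convex body inscribed in `D3` and not contained in a plane
has positive volume; and every closed convex set inscribed in `D3` of volume zero is a
square. -/
theorem inscribed_in_rhombic_dodecahedron_volume :
    (∀ K : Set (EuclideanSpace ℝ (Fin 3)), IsCompact K → Convex ℝ K → K.Nonempty →
      StrictConvex ℝ K → InscribedInD3 K → 0 < volume K) ∧
    (∀ K : Set (EuclideanSpace ℝ (Fin 3)), IsCompact K → Convex ℝ K →
      InscribedInD3 K →
      (¬ ∃ (v : EuclideanSpace ℝ (Fin 3)) (c : ℝ), v ≠ 0 ∧ K ⊆ {x | ⟪x, v⟫ = c}) →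
      0 < volume K) ∧
    (∀ K : Set (EuclideanSpace ℝ (Fin 3)), IsClosed K → Convex ℝ K →
      InscribedInD3 K → volume K = 0 → IsSquareIn3 K) := by
  refine ⟨?_, ?_, ?_⟩
  · intro K _ _ _ hstrict hins
    obtain ⟨x, hx, hx1⟩ := touch_coord hins 0 1 (by decide) 1 1 (Or.inl rfl) (Or.inl rfl)
    obtain ⟨y, hy, hy1⟩ := touch_coord hins 0 1 (by decide) (-1) (-1) (Or.inr rfl) (Or.inr rfl)
    have hs2pos : (0:ℝ) < Real.sqrt 2 := by positivity
    have hxy : x ≠ y := by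
      intro h; rw [h] at hx1; nlinarith
    have hmid := hstrict hx hy hxy one_half_pos one_half_pos (by norm_num)
    exact MeasureTheory.Measure.measure_pos_of_nonempty_interior volume ⟨_, hmid⟩
  · intro K _ hconv hins hnp
    by_contra hvol
    have hvol0 : volume K = 0 := by
      by_contra h; exact hvol (zero_lt_iff.mpr h)
    have hne : K.Nonempty := by
      obtain ⟨x, hx, _⟩ := touch_coord hins 0 1 (by decide) 1 1 (Or.inl rfl) (Or.inl rfl)
      exact ⟨x, hx⟩
    exact hnp (exists_plane hconv hne hvol0)
  · intro K _ hconv hins hvol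
    have hne : K.Nonempty := by
      obtain ⟨x, hx, _⟩ := touch_coord hins 0 1 (by decide) 1 1 (Or.inl rfl) (Or.inl rfl)
      exact ⟨x, hx⟩
    obtain ⟨v, c, hv0, hsub⟩ := exists_plane hconv hne hvol
    exact planar_square hconv hins v c hv0 hsub
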